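/- arXiv:1602.07779 — 2 statements merged into one kernel-verified Lean document; each statement's English description precedes it below -/
import Mathlib

section
/- Let C_n (n ≥ 3) be the directed cycle: the directed graph with vertex set {x_1, x_2, …, x_n} and edge set {(x_i, x_{i+1}) : 1 ≤ i ≤ n−1} ∪ {(x_n, x_1)}. Then C_n is Ricci-flat; that is, κ(x, y) = 0 for every edge (x, y) of C_n. -/
open Filter Set Topology

variable {V : Type*}

/-- The out-neighborhood of a vertex. -/
def outN (E : V → V → Prop) (x : V) : Set V := {y | E x y}

/-- The in-neighborhood of a vertex. -/
def inN (E : V → V → Prop) (x : V) : Set V := {y | E y x}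

/-- The neighborhood `Γ(x) = Γ^in(x) ∪ Γ^out(x)` of a vertex. -/
def nbhd (E : V → V → Prop) (x : V) : Set V := inN E x ∪ outN E x

/-- The degree `d_x = |Γ(x)|`. -/
noncomputable def deg (E : V → V → Prop) (x : V) : ℕ := (nbhd E x).ncard

/-- The out-degree `d_x^out = |Γ^out(x)|`. -/
noncomputable def outDeg (E : V → V → Prop) (x : V) : ℕ := (outN E x).ncard

/-- The in-degree `d_x^in = |Γ^in(x)|`. -/
noncomputable def inDeg (E : V → V → Prop) (x : V) : ℕ := (inN E x).ncard

/-- A directed graph is locally finite if every vertex has finite degree. -/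
def LocFin (E : V → V → Prop) : Prop := ∀ x, (nbhd E x).Finite

/-- A directed graph (with edges given by a relation, hence no multi-edges) is simple when
it has no loops. -/
def NoLoops (E : V → V → Prop) : Prop := ∀ x, ¬ E x x

/-- `f 0, f 1, …, f n` is a directed walk of length `n` (consecutive pairs are edges). -/
def IsDiWalk (E : V → V → Prop) (n : ℕ) (f : ℕ → V) : Prop := ∀ i, i < n → E (f i) (f (i + 1))

/-- A directed graph is strongly connected if for any two vertices there exists a
directed path (of length at least one) from one to the other. -/
def StronglyConnected (E : V → V → Prop) : Prop :=
  ∀ x y : V, ∃ n, 1 ≤ n ∧ ∃ f : ℕ → V, f 0 = x ∧ f n = y ∧ IsDiWalk E n f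

/-- The distance `d(x,y)`: the length of a shortest directed path from `x` to `y`. -/
noncomputable def ddist (E : V → V → Prop) (x y : V) : ℕ :=
  sInf {n : ℕ | ∃ f : ℕ → V, f 0 = x ∧ f n = y ∧ IsDiWalk E n f}

open Classical in
/-- The probability measure `m_x^α`. -/
noncomputable def mAlpha (E : V → V → Prop) (α : ℝ) (x : V) : V → ℝ := fun v =>
  if v = x then α + (1 - α) * (inDeg E x : ℝ) / (deg E x : ℝ)
  else if E x v then (1 - α) / (deg E x : ℝ)
  else 0

/-- A coupling between `m_x^α` and `m_y^α`: a map `A : V × V → [0,1]` (of finite support)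
whose marginals are `m_x^α` and `m_y^α`. -/
def IsCoupling (E : V → V → Prop) (α : ℝ) (x y : V) (A : V → V → ℝ) : Prop :=
  (Function.support fun p : V × V => A p.1 p.2).Finite ∧
  (∀ u v, A u v ∈ Set.Icc (0 : ℝ) 1) ∧
  (∀ u, ∑ᶠ v, A u v = mAlpha E α x u) ∧
  (∀ v, ∑ᶠ u, A u v = mAlpha E α y v)

/-- The 1-Wasserstein distance `W(m_x^α, m_y^α)`. -/
noncomputable def Wass (E : V → V → Prop) (α : ℝ) (x y : V) : ℝ :=
  sInf {w : ℝ | ∃ A : V → V → ℝ, IsCoupling E α x y A ∧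
    w = ∑ᶠ u, ∑ᶠ v, A u v * (ddist E u v : ℝ)}

/-- The α-Ricci curvature `κ_α(x,y) = 1 − W(m_x^α, m_y^α)/d(x,y)`. -/
noncomputable def ricciAlpha (E : V → V → Prop) (α : ℝ) (x y : V) : ℝ :=
  1 - Wass E α x y / (ddist E x y : ℝ)

/-- `RicciTendsto E x y k` means the Ricci curvature `κ(x,y) = lim_{α→1} κ_α(x,y)/(1−α)`
exists and equals `k`. -/
def RicciTendsto (E : V → V → Prop) (x y : V) (k : ℝ) : Prop :=
  Tendsto (fun α : ℝ => ricciAlpha E α x y / (1 - α)) (𝓝[<] (1 : ℝ)) (𝓝 k)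

/-- A directed graph is Ricci-flat if `κ(x,y) = 0` for every edge `(x,y)`. -/
def RicciFlat (E : V → V → Prop) : Prop := ∀ x y : V, E x y → RicciTendsto E x y 0

/-- The directed cycle `C_n`: vertices `ZMod n`, with an edge from `i` to `i + 1`. -/
def cycleE (n : ℕ) : ZMod n → ZMod n → Prop := fun i j => j = i + 1

section cycleProof

variable {n : ℕ}

private lemma cyc1 (hn : 3 ≤ n) : (1 : ZMod n) ≠ 0 := by
  intro h
  have h1 : ((1 : ℕ) : ZMod n) = 0 := by exact_mod_cast h
  have h2 := (ZMod.natCast_eq_zero_iff 1 n).mp h1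
  have := Nat.le_of_dvd one_pos h2
  omega

private lemma cyc2 (hn : 3 ≤ n) : (2 : ZMod n) ≠ 0 := by
  intro h
  have h1 : ((2 : ℕ) : ZMod n) = 0 := by exact_mod_cast h
  have h2 := (ZMod.natCast_eq_zero_iff 2 n).mp h1
  have := Nat.le_of_dvd two_pos h2
  omega

private lemma ne_add_one (hn : 3 ≤ n) (x : ZMod n) : x + 1 ≠ x := by
  intro h; exact cyc1 hn (by linear_combination h)

private lemma ne_add_two (hn : 3 ≤ n) (x : ZMod n) : x + 2 ≠ x := by
  intro h; exact cyc2 hn (by linear_combination h)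

private lemma ne_two_one (hn : 3 ≤ n) (x : ZMod n) : x + 2 ≠ x + 1 := by
  intro h; exact cyc1 hn (by linear_combination h)

private lemma ne_sub_add (hn : 3 ≤ n) (x : ZMod n) : x - 1 ≠ x + 1 := by
  intro h; exact cyc2 hn (by linear_combination -h)

private lemma inN_cyc (x : ZMod n) : inN (cycleE n) x = {x - 1} := by
  ext y
  simp only [inN, cycleE, Set.mem_setOf_eq, Set.mem_singleton_iff]
  constructor <;> intro h <;> linear_combination -h

private lemma outN_cyc (x : ZMod n) : outN (cycleE n) x = {x + 1} := by
  ext y; simp [outN, cycleE]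

private lemma deg_cyc (hn : 3 ≤ n) (x : ZMod n) : deg (cycleE n) x = 2 := by
  rw [deg, nbhd, inN_cyc, outN_cyc, Set.singleton_union]
  exact Set.ncard_pair (ne_sub_add hn x)

private lemma inDeg_cyc (x : ZMod n) : inDeg (cycleE n) x = 1 := by
  rw [inDeg, inN_cyc, Set.ncard_singleton]

private lemma mA_self (hn : 3 ≤ n) (α : ℝ) (x : ZMod n) :
    mAlpha (cycleE n) α x x = (1 + α) / 2 := by
  rw [mAlpha, if_pos rfl, deg_cyc hn, inDeg_cyc]
  push_cast; ring

private lemma mA_next (hn : 3 ≤ n) (α : ℝ) (x : ZMod n) :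
    mAlpha (cycleE n) α x (x + 1) = (1 - α) / 2 := by
  rw [mAlpha, if_neg (ne_add_one hn x), if_pos (show cycleE n x (x+1) from rfl), deg_cyc hn]
  norm_num

private lemma mA_other (α : ℝ) (x v : ZMod n) (h1 : v ≠ x) (h2 : v ≠ x + 1) :
    mAlpha (cycleE n) α x v = 0 := by
  rw [mAlpha, if_neg h1, if_neg (show ¬ cycleE n x v from h2)]

private lemma ddist_self (E : ZMod n → ZMod n → Prop) (x : ZMod n) : ddist E x x = 0 := by
  apply Nat.sInf_eq_zero.mpr
  exact Or.inl ⟨fun _ => x, rfl, rfl, fun i hi => absurd hi (Nat.not_lt_zero i)⟩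

private lemma one_mem_walk (x : ZMod n) :
    1 ∈ {m : ℕ | ∃ f : ℕ → ZMod n, f 0 = x ∧ f m = x + 1 ∧ IsDiWalk (cycleE n) m f} := by
  refine ⟨fun i => if i = 0 then x else x + 1, by simp, by simp, ?_⟩
  intro i hi
  interval_cases i
  simp [cycleE]

private lemma ddist_next (hn : 3 ≤ n) (x : ZMod n) : ddist (cycleE n) x (x + 1) = 1 := by
  have h1 := one_mem_walk (n := n) x
  apply le_antisymm (Nat.sInf_le h1)
  rw [Nat.one_le_iff_ne_zero]
  intro h0
  rcases Nat.sInf_eq_zero.mp h0 with h | h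
  · obtain ⟨f, hf0, hfm, -⟩ := h
    exact ne_add_one hn x (hfm ▸ hf0 ▸ rfl)
  · exact absurd h1 (h ▸ Set.notMem_empty _)

private lemma ddist_two_le (hn : 3 ≤ n) (x : ZMod n) : 2 ≤ ddist (cycleE n) x (x + 2) := by
  have hne : {m : ℕ | ∃ f : ℕ → ZMod n, f 0 = x ∧ f m = x + 2 ∧
      IsDiWalk (cycleE n) m f}.Nonempty := by
    refine ⟨2, fun i => if i = 0 then x else if i = 1 then x + 1 else x + 2, by simp, by simp, ?_⟩
    intro i hi
    interval_cases i
    · simp [cycleE]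
    · simp only [cycleE]
      norm_num
      ring
  apply le_csInf hne
  rintro m ⟨f, hf0, hfm, hw⟩
  by_contra hlt
  push_neg at hlt
  interval_cases m
  · exact ne_add_two hn x (hfm ▸ hf0 ▸ rfl)
  · have h := hw 0 one_pos
    simp only [cycleE, Nat.zero_add] at h
    rw [hfm, hf0] at h
    exact ne_two_one hn x h

end cycleProof


section cycleMain

variable {n : ℕ}

private lemma wass_cyc (hn : 3 ≤ n) {α : ℝ} (hα : α ∈ Set.Icc (-1 : ℝ) 1) (x : ZMod n) :
    Wass (cycleE n) α x (x + 1) = 1 := by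
  classical
  obtain ⟨hα1, hα2⟩ := hα
  have hxy : x + 1 ≠ x := ne_add_one hn x
  have hxz : x + 2 ≠ x := ne_add_two hn x
  have hyz : x + 2 ≠ x + 1 := ne_two_one hn x
  have hx2 : x + 1 + 1 = x + 2 := by ring
  have hd1 : ddist (cycleE n) x (x + 1) = 1 := ddist_next hn x
  have hd2 : ddist (cycleE n) (x + 1) (x + 2) = 1 := by rw [← hx2]; exact ddist_next hn (x + 1)
  have hd0 : ddist (cycleE n) (x + 1) (x + 1) = 0 := ddist_self _ (x + 1)
  have hd3 : (2 : ℕ) ≤ ddist (cycleE n) x (x + 2) := ddist_two_le hn x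
  set S := {w : ℝ | ∃ A : ZMod n → ZMod n → ℝ, IsCoupling (cycleE n) α x (x + 1) A ∧
    w = ∑ᶠ u, ∑ᶠ v, A u v * (ddist (cycleE n) u v : ℝ)} with hS
  -- the explicit optimal coupling
  set A : ZMod n → ZMod n → ℝ := fun u v =>
    if u = x then (if v = x + 1 then (1 + α) / 2 else 0)
    else if u = x + 1 then (if v = x + 2 then (1 - α) / 2 else 0) else 0 with hA
  have hAx : ∀ v, A x v = if v = x + 1 then (1 + α) / 2 else 0 := by
    intro v; simp [hA]
  have hAy : ∀ v, A (x + 1) v = if v = x + 2 then (1 - α) / 2 else 0 := by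
    intro v; simp [hA, hxy]
  have hAo : ∀ u, u ≠ x → u ≠ x + 1 → ∀ v, A u v = 0 := by
    intro u h1 h2 v; simp [hA, h1, h2]
  have hmem : (1 : ℝ) ∈ S := by
    refine ⟨A, ⟨?_, ?_, ?_, ?_⟩, ?_⟩
    · -- finite support
      refine ((Set.finite_singleton ((x + 1, x + 2) : ZMod n × ZMod n)).insert
        (x, x + 1)).subset ?_
      rintro ⟨u, v⟩ hp
      simp only [Function.mem_support] at hp
      simp only [Set.mem_insert_iff, Set.mem_singleton_iff, Prod.mk.injEq]
      by_cases h1 : u = x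
      · rw [h1, hAx] at hp
        by_cases h2 : v = x + 1
        · exact Or.inl ⟨h1, h2⟩
        · rw [if_neg h2] at hp; exact absurd rfl hp
      by_cases h2 : u = x + 1
      · rw [h2, hAy] at hp
        by_cases h3 : v = x + 2
        · exact Or.inr ⟨h2, h3⟩
        · rw [if_neg h3] at hp; exact absurd rfl hp
      · rw [hAo u h1 h2] at hp; exact absurd rfl hp
    · -- entries in [0,1]
      intro u v
      by_cases h1 : u = x
      · rw [h1, hAx]; split_ifs
        · constructor <;> [linarith; linarith]
        · exact ⟨le_refl _, zero_le_one⟩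
      by_cases h2 : u = x + 1
      · rw [h2, hAy]; split_ifs
        · constructor <;> [linarith; linarith]
        · exact ⟨le_refl _, zero_le_one⟩
      · rw [hAo u h1 h2]; exact ⟨le_refl _, zero_le_one⟩
    · -- row marginals
      intro u
      by_cases h1 : u = x
      · rw [h1]
        rw [finsum_eq_single _ (x + 1) (fun v hv => by rw [hAx, if_neg hv]),
          hAx, if_pos rfl, mA_self hn]
      by_cases h2 : u = x + 1
      · rw [h2]
        rw [finsum_eq_single _ (x + 2) (fun v hv => by rw [hAy, if_neg hv]),
          hAy, if_pos rfl, mA_next hn]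
      · rw [finsum_congr (hAo u h1 h2), finsum_zero, mA_other α x u h1 h2]
    · -- column marginals
      intro v
      by_cases h1 : v = x + 1
      · rw [h1]
        rw [finsum_eq_single _ x (fun u hu => by
          by_cases h : u = x + 1
          · rw [h, hAy, if_neg (Ne.symm hyz)]
          · exact hAo u hu h _),
          hAx, if_pos rfl, mA_self hn]
      by_cases h2 : v = x + 2
      · rw [h2]
        rw [finsum_eq_single _ (x + 1) (fun u hu => by
          by_cases h : u = x
          · rw [h, hAx, if_neg hyz]
          · exact hAo u h hu _),
          hAy, if_pos rfl, ← hx2, mA_next hn]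
      · have hz : ∀ u, A u v = 0 := by
          intro u
          by_cases h : u = x
          · rw [h, hAx, if_neg h1]
          by_cases h' : u = x + 1
          · rw [h', hAy, if_neg h2]
          · exact hAo u h h' _
        rw [finsum_congr hz, finsum_zero,
          mA_other α (x + 1) v h1 (by rw [hx2]; exact h2)]
    · -- cost equals 1
      have gx : ∑ᶠ v, A x v * (ddist (cycleE n) x v : ℝ) = (1 + α) / 2 := by
        rw [finsum_eq_single _ (x + 1) (fun v hv => by rw [hAx, if_neg hv, zero_mul]),
          hAx, if_pos rfl, hd1]
        norm_num
      have gy : ∑ᶠ v, A (x + 1) v * (ddist (cycleE n) (x + 1) v : ℝ) = (1 - α) / 2 := by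
        rw [finsum_eq_single _ (x + 2) (fun v hv => by rw [hAy, if_neg hv, zero_mul]),
          hAy, if_pos rfl, hd2]
        norm_num
      have gz : ∀ u, u ≠ x → u ≠ x + 1 →
          ∑ᶠ v, A u v * (ddist (cycleE n) u v : ℝ) = 0 := by
        intro u h1 h2
        rw [finsum_congr (fun v => by rw [hAo u h1 h2, zero_mul]), finsum_zero]
      rw [finsum_eq_finset_sum_of_support_subset _
        (s := ({x, x + 1} : Finset (ZMod n))) (by
          intro u hu
          simp only [Function.mem_support] at hu
          simp only [Finset.coe_insert, Finset.coe_singleton, Set.mem_insert_iff,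
            Set.mem_singleton_iff]
          by_contra hc
          push_neg at hc
          exact hu (gz u hc.1 hc.2)),
        Finset.sum_pair (Ne.symm hxy), gx, gy]
      ring
  -- lower bound
  have hlb : ∀ w ∈ S, (1 : ℝ) ≤ w := by
    rintro w ⟨B, ⟨hfin, hIcc, hrow, hcol⟩, rfl⟩
    have h0 : ∀ u v, 0 ≤ B u v := fun u v => (hIcc u v).1
    have hrfin : ∀ u, (Function.support (B u)).Finite := by
      intro u
      refine (hfin.image Prod.snd).subset ?_
      intro v hv
      exact ⟨(u, v), hv, rfl⟩
    have hcfin : ∀ v, (Function.support fun u => B u v).Finite := by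
      intro v
      refine (hfin.image Prod.fst).subset ?_
      intro u hu
      exact ⟨(u, v), hu, rfl⟩
    have hrow0 : ∀ u, u ≠ x → u ≠ x + 1 → ∀ v, B u v = 0 := by
      intro u h1 h2 v
      have hle : B u v ≤ ∑ᶠ v', B u v' := single_le_finsum v (hrfin u) (h0 u)
      rw [hrow u, mA_other α x u h1 h2] at hle
      exact le_antisymm hle (h0 u v)
    have hcol0 : ∀ v, v ≠ x + 1 → v ≠ x + 2 → ∀ u, B u v = 0 := by
      intro v h1 h2 u
      have hle : B u v ≤ ∑ᶠ u', B u' v := single_le_finsum u (hcfin v) (fun j => h0 j v)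
      rw [hcol v, mA_other α (x + 1) v h1 (by rw [hx2]; exact h2)] at hle
      exact le_antisymm hle (h0 u v)
    have hmAy2 : mAlpha (cycleE n) α (x + 1) (x + 2) = (1 - α) / 2 := by
      rw [← hx2]; exact mA_next hn α (x + 1)
    have hrs : B x (x + 1) + B x (x + 2) = (1 + α) / 2 := by
      have := hrow x
      rwa [finsum_eq_finset_sum_of_support_subset _
        (s := ({x + 1, x + 2} : Finset (ZMod n))) (by
          intro v hv
          simp only [Function.mem_support] at hv
          simp only [Finset.coe_insert, Finset.coe_singleton, Set.mem_insert_iff,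
            Set.mem_singleton_iff]
          by_contra hc
          push_neg at hc
          exact hv (hcol0 v hc.1 hc.2 x)),
        Finset.sum_pair (Ne.symm hyz), mA_self hn] at this
    have hcs : B x (x + 2) + B (x + 1) (x + 2) = (1 - α) / 2 := by
      have := hcol (x + 2)
      rwa [finsum_eq_finset_sum_of_support_subset _
        (s := ({x, x + 1} : Finset (ZMod n))) (by
          intro u hu
          simp only [Function.mem_support] at hu
          simp only [Finset.coe_insert, Finset.coe_singleton, Set.mem_insert_iff,
            Set.mem_singleton_iff]
          by_contra hc
          push_neg at hc
          exact hu (hrow0 u hc.1 hc.2 (x + 2))),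
        Finset.sum_pair (Ne.symm hxy), hmAy2] at this
    have ginner : ∀ u, ∑ᶠ v, B u v * (ddist (cycleE n) u v : ℝ) =
        B u (x + 1) * (ddist (cycleE n) u (x + 1) : ℝ) +
        B u (x + 2) * (ddist (cycleE n) u (x + 2) : ℝ) := by
      intro u
      rw [finsum_eq_finset_sum_of_support_subset _
        (s := ({x + 1, x + 2} : Finset (ZMod n))) (by
          intro v hv
          simp only [Function.mem_support] at hv
          simp only [Finset.coe_insert, Finset.coe_singleton, Set.mem_insert_iff,
            Set.mem_singleton_iff]
          by_contra hc
          push_neg at hc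
          exact hv (by rw [hcol0 v hc.1 hc.2 u, zero_mul])),
        Finset.sum_pair (Ne.symm hyz)]
    have gz : ∀ u, u ≠ x → u ≠ x + 1 →
        ∑ᶠ v, B u v * (ddist (cycleE n) u v : ℝ) = 0 := by
      intro u h1 h2
      rw [ginner u, hrow0 u h1 h2, hrow0 u h1 h2, zero_mul, zero_mul, add_zero]
    rw [finsum_eq_finset_sum_of_support_subset _
      (s := ({x, x + 1} : Finset (ZMod n))) (by
        intro u hu
        simp only [Function.mem_support] at hu
        simp only [Finset.coe_insert, Finset.coe_singleton, Set.mem_insert_iff,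
          Set.mem_singleton_iff]
        by_contra hc
        push_neg at hc
        exact hu (gz u hc.1 hc.2)),
      Finset.sum_pair (Ne.symm hxy), ginner x, ginner (x + 1), hd1, hd0, hd2]
    have hD : (2 : ℝ) ≤ (ddist (cycleE n) x (x + 2) : ℝ) := by exact_mod_cast hd3
    push_cast
    nlinarith [mul_nonneg (h0 x (x + 2)) (sub_nonneg.mpr hD), h0 (x + 1) (x + 1)]
  exact le_antisymm (csInf_le ⟨1, fun w hw => hlb w hw⟩ hmem) (le_csInf ⟨1, hmem⟩ hlb)

private lemma ricci_zero (hn : 3 ≤ n) {α : ℝ} (hα : α ∈ Set.Icc (-1 : ℝ) 1) (x : ZMod n) :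
    ricciAlpha (cycleE n) α x (x + 1) = 0 := by
  rw [ricciAlpha, wass_cyc hn hα x, ddist_next hn x]
  norm_num

end cycleMain


theorem stmt_6 (n : ℕ) (hn : 3 ≤ n) : RicciFlat (cycleE n) := by
  intro x y hxy
  rw [show y = x + 1 from hxy]
  unfold RicciTendsto
  have h : ∀ᶠ α in 𝓝[<] (1 : ℝ),
      (fun β : ℝ => (0 : ℝ)) α = ricciAlpha (cycleE n) α x (x + 1) / (1 - α) := by
    filter_upwards [Ioo_mem_nhdsLT_of_mem
      (show (1 : ℝ) ∈ Set.Ioc (0 : ℝ) 1 from ⟨one_pos, le_refl _⟩)] with α hα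
    rw [ricci_zero hn ⟨by linarith [hα.1], le_of_lt hα.2⟩, zero_div]
  exact Filter.Tendsto.congr' h tendsto_const_nhds
end

section
/- Let G = (V,E) be a locally finite, simple, strongly connected directed d-regular graph satisfying condition (a): for every edge (x, y) ∈ E, Γ^out(x) ∩ Γ^out(y) = ∅. If G is Ricci-flat, then the out-degree d_u^out is the same for all vertices u of G. -/
open Filter Set Topology

variable {V : Type*}

section Helpers

variable {V : Type*} {E : V → V → Prop}

lemma outN_finite (hlf : LocFin E) (x : V) : (outN E x).Finite :=
  (hlf x).subset Set.subset_union_right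

lemma inN_finite (hlf : LocFin E) (x : V) : (inN E x).Finite :=
  (hlf x).subset Set.subset_union_left

lemma not_loop_out (hs : NoLoops E) (x : V) : x ∉ outN E x := fun h => hs x h

lemma mem_out_ne (hs : NoLoops E) {x v : V} (h : v ∈ outN E x) : v ≠ x :=
  fun hvx => hs x (hvx ▸ h)

lemma exists_out (hsc : StronglyConnected E) (x : V) : ∃ y, E x y := by
  obtain ⟨n, hn, f, h0, _, hw⟩ := hsc x x
  exact ⟨f 1, h0 ▸ hw 0 hn⟩

lemma exists_in (hsc : StronglyConnected E) (x : V) : ∃ y, E y x := by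
  obtain ⟨n, hn, f, h0, hn', hw⟩ := hsc x x
  refine ⟨f (n - 1), ?_⟩
  have h1 : n - 1 + 1 = n := by omega
  have := hw (n - 1) (by omega)
  rwa [h1, hn'] at this

lemma dout_pos (hlf : LocFin E) (hsc : StronglyConnected E) (x : V) : 0 < outDeg E x := by
  obtain ⟨y, hy⟩ := exists_out hsc x
  exact (Set.ncard_pos (outN_finite hlf x)).2 ⟨y, hy⟩

lemma din_pos (hlf : LocFin E) (hsc : StronglyConnected E) (x : V) : 0 < inDeg E x := by
  obtain ⟨y, hy⟩ := exists_in hsc x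
  exact (Set.ncard_pos (inN_finite hlf x)).2 ⟨y, hy⟩

lemma deg_pos (hlf : LocFin E) (hsc : StronglyConnected E) (x : V) : 0 < deg E x := by
  obtain ⟨y, hy⟩ := exists_out hsc x
  exact (Set.ncard_pos (hlf x)).2 ⟨y, Set.mem_union_right _ hy⟩

lemma din_le_deg (hlf : LocFin E) (x : V) : inDeg E x ≤ deg E x :=
  Set.ncard_le_ncard Set.subset_union_left (hlf x)

lemma dout_le_deg (hlf : LocFin E) (x : V) : outDeg E x ≤ deg E x :=
  Set.ncard_le_ncard Set.subset_union_right (hlf x)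

lemma din_le_sum (hlf : LocFin E) (x : V) : inDeg E x ≤ inDeg E x + outDeg E x :=
  Nat.le_add_right _ _

/-- `deg + |in ∩ out| = din + dout`. -/
lemma deg_add_inter (hlf : LocFin E) (x : V) :
    deg E x + ((inN E x) ∩ (outN E x)).ncard = inDeg E x + outDeg E x :=
  Set.ncard_union_add_ncard_inter _ _ (inN_finite hlf x) (outN_finite hlf x)

/-- Walk-monotone functions are monotone along strong connectivity. -/
lemma le_of_edge_le (hsc : StronglyConnected E) {g : V → ℕ}
    (hmono : ∀ x y, E x y → g x ≤ g y) (u v : V) : g u ≤ g v := by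
  obtain ⟨n, _, f, h0, hn, hw⟩ := hsc u v
  have key : ∀ i ≤ n, g (f 0) ≤ g (f i) := by
    intro i hi
    induction i with
    | zero => exact le_rfl
    | succ k ih => exact (ih (by omega)).trans (hmono _ _ (hw k (by omega)))
  have := key n le_rfl
  rwa [h0, hn] at this

lemma eq_of_edge_le (hsc : StronglyConnected E) {g : V → ℕ}
    (hmono : ∀ x y, E x y → g x ≤ g y) (u v : V) : g u = g v :=
  le_antisymm (le_of_edge_le hsc hmono u v) (le_of_edge_le hsc hmono v u)

/-- distance set nonempty -/
lemma ddist_set_nonempty (hsc : StronglyConnected E) (u v : V) :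
    {n : ℕ | ∃ f : ℕ → V, f 0 = u ∧ f n = v ∧ IsDiWalk E n f}.Nonempty := by
  obtain ⟨n, _, f, h0, hn, hw⟩ := hsc u v
  exact ⟨n, f, h0, hn, hw⟩

lemma one_le_ddist (hsc : StronglyConnected E) {u v : V} (huv : u ≠ v) :
    1 ≤ ddist E u v := by
  rcases Nat.eq_zero_or_pos (ddist E u v) with h | h
  · exfalso
    have hmem := Nat.sInf_mem (ddist_set_nonempty hsc u v)
    rw [show sInf {n : ℕ | ∃ f : ℕ → V, f 0 = u ∧ f n = v ∧ IsDiWalk E n f} = ddist E u v from rfl, h] at hmem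
    obtain ⟨f, h0, hn, _⟩ := hmem
    exact huv (h0 ▸ hn ▸ rfl)
  · exact h

lemma two_le_ddist (hsc : StronglyConnected E) {u v : V} (huv : u ≠ v) (hE : ¬E u v) :
    2 ≤ ddist E u v := by
  have h1 := one_le_ddist hsc huv
  rcases Nat.lt_or_ge (ddist E u v) 2 with h | h
  · exfalso
    have hd : ddist E u v = 1 := by omega
    have hmem := Nat.sInf_mem (ddist_set_nonempty hsc u v)
    rw [show sInf {n : ℕ | ∃ f : ℕ → V, f 0 = u ∧ f n = v ∧ IsDiWalk E n f} = ddist E u v from rfl, hd] at hmem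
    obtain ⟨f, h0, hn, hw⟩ := hmem
    exact hE (h0 ▸ hn ▸ hw 0 one_pos)
  · exact h

lemma ddist_edge (hs : NoLoops E) {x y : V} (hxy : E x y) : ddist E x y = 1 := by
  have hxney : x ≠ y := fun h => hs x (h ▸ hxy)
  have h1 : (1 : ℕ) ∈ {n : ℕ | ∃ f : ℕ → V, f 0 = x ∧ f n = y ∧ IsDiWalk E n f} := by
    refine ⟨fun i => if i = 0 then x else y, by simp, by simp, ?_⟩
    intro i hi
    interval_cases i
    simpa using hxy
  refine le_antisymm (Nat.sInf_le h1) ?_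
  rcases Nat.eq_zero_or_pos (ddist E x y) with h | h
  · exfalso
    have hmem := Nat.sInf_mem ⟨1, h1⟩
    rw [show sInf {n : ℕ | ∃ f : ℕ → V, f 0 = x ∧ f n = y ∧ IsDiWalk E n f} = ddist E x y from rfl, h] at hmem
    obtain ⟨f, h0, hn, _⟩ := hmem
    exact hxney (h0 ▸ hn ▸ rfl)
  · exact h

end Helpers
section MeasureLemmas

attribute [local instance] Classical.propDecidable

variable {V : Type*} {E : V → V → Prop}

lemma mAlpha_self (α : ℝ) (x : V) :
    mAlpha E α x x = α + (1 - α) * (inDeg E x : ℝ) / (deg E x : ℝ) := by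
  simp [mAlpha]

lemma mAlpha_out {x v : V} (hvx : v ≠ x) (h : E x v) (α : ℝ) :
    mAlpha E α x v = (1 - α) / (deg E x : ℝ) := by
  simp [mAlpha, hvx, h]

lemma mAlpha_zero {x v : V} (hvx : v ≠ x) (h : ¬E x v) (α : ℝ) :
    mAlpha E α x v = 0 := by
  simp [mAlpha, hvx, h]

lemma mAlpha_nonneg {α : ℝ} (h0 : 0 ≤ α) (h1 : α ≤ 1) (x v : V) :
    0 ≤ mAlpha E α x v := by
  have hε : (0:ℝ) ≤ 1 - α := by linarith
  unfold mAlpha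
  split_ifs
  · exact add_nonneg h0 (div_nonneg (mul_nonneg hε (Nat.cast_nonneg _)) (Nat.cast_nonneg _))
  · exact div_nonneg hε (Nat.cast_nonneg _)
  · exact le_rfl

lemma mAlpha_support_sub (α : ℝ) (x : V) {v : V} (hv : mAlpha E α x v ≠ 0) :
    v = x ∨ E x v := by
  by_contra hmem
  push_neg at hmem
  exact hv (mAlpha_zero hmem.1 hmem.2 α)

/-- Generic computation of `∑ᶠ v, g v * mAlpha E α x v`. -/
lemma finsum_mul_mAlpha (hlf : LocFin E) (hs : NoLoops E) (α : ℝ) (x : V) (g : V → ℝ) :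
    ∑ᶠ v, g v * mAlpha E α x v
      = g x * (α + (1 - α) * (inDeg E x : ℝ) / (deg E x : ℝ))
        + ∑ v ∈ (outN_finite hlf x).toFinset, g v * ((1 - α) / (deg E x : ℝ)) := by
  have hsub : (Function.support fun v => g v * mAlpha E α x v) ⊆
      ↑(insert x (outN_finite hlf x).toFinset) := by
    intro v hv
    simp only [Function.mem_support] at hv
    have : mAlpha E α x v ≠ 0 := fun h => hv (by rw [h, mul_zero])
    rcases mAlpha_support_sub α x this with h | h
    · simp [h]
    · simp only [Finset.coe_insert, Set.mem_insert_iff, Set.Finite.coe_toFinset]; exact Or.inr h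
  rw [finsum_eq_sum_of_support_subset _ hsub, Finset.sum_insert (by
    simp only [Set.Finite.mem_toFinset]; exact not_loop_out hs x), mAlpha_self]
  congr 1
  refine Finset.sum_congr rfl fun v hv => ?_
  simp only [Set.Finite.mem_toFinset] at hv
  rw [mAlpha_out (mem_out_ne hs hv) hv]

lemma card_outN (hlf : LocFin E) (x : V) :
    (outN_finite hlf x).toFinset.card = outDeg E x := by
  rw [outDeg, Set.ncard_eq_toFinset_card _ (outN_finite hlf x)]

/-- Total mass of `mAlpha`. -/
lemma finsum_mAlpha (hlf : LocFin E) (hs : NoLoops E) (α : ℝ) (x : V) :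
    ∑ᶠ v, mAlpha E α x v
      = α + (1 - α) * ((inDeg E x : ℝ) + (outDeg E x : ℝ)) / (deg E x : ℝ) := by
  have h := finsum_mul_mAlpha hlf hs α x (fun _ => 1)
  simp only [one_mul] at h
  rw [h, Finset.sum_const, card_outN hlf x, nsmul_eq_mul]
  ring

end MeasureLemmas
section Coupling

attribute [local instance] Classical.propDecidable

variable {V : Type*} {E : V → V → Prop}

lemma finsum_ne_zero_exists {f : V → ℝ} (h : ∑ᶠ v, f v ≠ 0) : ∃ v, f v ≠ 0 := by
  by_contra hc
  push_neg at hc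
  exact h (by simp [funext hc])

lemma coupling_finset {α : ℝ} {x y : V} {A : V → V → ℝ} (hA : IsCoupling E α x y A) :
    ∃ U : Finset V, ∀ u v, A u v ≠ 0 → u ∈ U ∧ v ∈ U := by
  obtain ⟨hfin, -, -, -⟩ := hA
  refine ⟨hfin.toFinset.image Prod.fst ∪ hfin.toFinset.image Prod.snd, fun u v hne => ?_⟩
  have hmem : (u, v) ∈ hfin.toFinset := by
    rw [Set.Finite.mem_toFinset]
    exact hne
  exact ⟨Finset.mem_union_left _ (Finset.mem_image.2 ⟨(u,v), hmem, rfl⟩),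
    Finset.mem_union_right _ (Finset.mem_image.2 ⟨(u,v), hmem, rfl⟩)⟩

lemma coupling_marg_row {α : ℝ} {x y : V} {A : V → V → ℝ} (hA : IsCoupling E α x y A)
    {U : Finset V} (hU : ∀ u v, A u v ≠ 0 → u ∈ U ∧ v ∈ U) (u : V) :
    mAlpha E α x u = ∑ v ∈ U, A u v := by
  rw [← hA.2.2.1 u]
  exact finsum_eq_sum_of_support_subset _ (fun v hv => (hU u v hv).2)

lemma coupling_marg_col {α : ℝ} {x y : V} {A : V → V → ℝ} (hA : IsCoupling E α x y A)
    {U : Finset V} (hU : ∀ u v, A u v ≠ 0 → u ∈ U ∧ v ∈ U) (v : V) :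
    mAlpha E α y v = ∑ u ∈ U, A u v := by
  rw [← hA.2.2.2 v]
  exact finsum_eq_sum_of_support_subset _ (fun u hu => (hU u v hu).1)

lemma finsum_mul_m_eq_sum {α : ℝ} {x y : V} {A : V → V → ℝ} (hA : IsCoupling E α x y A)
    {U : Finset V} (hU : ∀ u v, A u v ≠ 0 → u ∈ U ∧ v ∈ U) (hm : ∀ u, mAlpha E α x u ≠ 0 → u ∈ U)
    (g : V → ℝ) :
    ∑ᶠ u, g u * mAlpha E α x u = ∑ u ∈ U, g u * mAlpha E α x u :=
  finsum_eq_sum_of_support_subset _ (fun u hu => by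
    have : mAlpha E α x u ≠ 0 := fun h => by simp [h] at hu
    exact hm u this)

lemma coupling_mx_mem {α : ℝ} {x y : V} {A : V → V → ℝ} (hA : IsCoupling E α x y A)
    {U : Finset V} (hU : ∀ u v, A u v ≠ 0 → u ∈ U ∧ v ∈ U) :
    ∀ u, mAlpha E α x u ≠ 0 → u ∈ U := by
  intro u hu
  rw [← hA.2.2.1 u] at hu
  obtain ⟨v, hv⟩ := finsum_ne_zero_exists hu
  exact (hU u v hv).1

lemma coupling_my_mem {α : ℝ} {x y : V} {A : V → V → ℝ} (hA : IsCoupling E α x y A)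
    {U : Finset V} (hU : ∀ u v, A u v ≠ 0 → u ∈ U ∧ v ∈ U) :
    ∀ v, mAlpha E α y v ≠ 0 → v ∈ U := by
  intro v hv
  rw [← hA.2.2.2 v] at hv
  obtain ⟨u, hu⟩ := finsum_ne_zero_exists hv
  exact (hU u v hu).2

/-- The total masses of the two marginals of a coupling agree. -/
lemma coupling_total {α : ℝ} {x y : V} {A : V → V → ℝ} (hA : IsCoupling E α x y A) :
    ∑ᶠ u, mAlpha E α x u = ∑ᶠ v, mAlpha E α y v := by
  obtain ⟨U, hU⟩ := coupling_finset hA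
  have h1 : ∑ᶠ u, mAlpha E α x u = ∑ u ∈ U, mAlpha E α x u :=
    finsum_eq_sum_of_support_subset _ (fun u hu => coupling_mx_mem hA hU u hu)
  have h2 : ∑ᶠ v, mAlpha E α y v = ∑ v ∈ U, mAlpha E α y v :=
    finsum_eq_sum_of_support_subset _ (fun v hv => coupling_my_mem hA hU v hv)
  rw [h1, h2]
  calc ∑ u ∈ U, mAlpha E α x u = ∑ u ∈ U, ∑ v ∈ U, A u v := by
        exact Finset.sum_congr rfl fun u _ => coupling_marg_row hA hU u
    _ = ∑ v ∈ U, ∑ u ∈ U, A u v := Finset.sum_comm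
    _ = ∑ v ∈ U, mAlpha E α y v :=
        Finset.sum_congr rfl fun v _ => (coupling_marg_col hA hU v).symm

/-- Weak Kantorovich duality. -/
lemma weak_duality {α : ℝ} {x y : V} {A : V → V → ℝ} (hA : IsCoupling E α x y A)
    (φ : V → ℝ) (hlip : ∀ u v, φ u - φ v ≤ (ddist E u v : ℝ)) :
    (∑ᶠ u, φ u * mAlpha E α x u) - (∑ᶠ v, φ v * mAlpha E α y v)
      ≤ ∑ᶠ u, ∑ᶠ v, A u v * (ddist E u v : ℝ) := by
  obtain ⟨U, hU⟩ := coupling_finset hA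
  have hAnn : ∀ u v, 0 ≤ A u v := fun u v => (hA.2.1 u v).1
  have hxe : ∑ᶠ u, φ u * mAlpha E α x u = ∑ u ∈ U, φ u * mAlpha E α x u :=
    finsum_eq_sum_of_support_subset _ (fun u hu => coupling_mx_mem hA hU u
      (fun h => by simp [h] at hu))
  have hye : ∑ᶠ v, φ v * mAlpha E α y v = ∑ v ∈ U, φ v * mAlpha E α y v :=
    finsum_eq_sum_of_support_subset _ (fun v hv => coupling_my_mem hA hU v
      (fun h => by simp [h] at hv))
  have hcost : ∑ᶠ u, ∑ᶠ v, A u v * (ddist E u v : ℝ)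
      = ∑ u ∈ U, ∑ v ∈ U, A u v * (ddist E u v : ℝ) := by
    have hin : ∀ u, ∑ᶠ v, A u v * (ddist E u v : ℝ) = ∑ v ∈ U, A u v * (ddist E u v : ℝ) :=
      fun u => finsum_eq_sum_of_support_subset _ (fun v hv => (hU u v
        (fun h => by simp [h] at hv)).2)
    rw [finsum_eq_sum_of_support_subset (fun u => ∑ᶠ v, A u v * (ddist E u v : ℝ))
      (s := U) (fun u hu => ?_)]
    · exact Finset.sum_congr rfl fun u _ => hin u
    · rw [Function.mem_support, hin u] at hu
      obtain ⟨v, hv, hne⟩ := Finset.exists_ne_zero_of_sum_ne_zero hu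
      exact (hU u v (fun h => by simp [h] at hne)).1
  rw [hxe, hye, hcost]
  have key : ∑ u ∈ U, φ u * mAlpha E α x u - ∑ v ∈ U, φ v * mAlpha E α y v
      = ∑ u ∈ U, ∑ v ∈ U, (φ u - φ v) * A u v := by
    simp only [sub_mul, Finset.sum_sub_distrib]
    congr 1
    · refine Finset.sum_congr rfl fun u _ => ?_
      rw [coupling_marg_row hA hU u, Finset.mul_sum]
    · rw [Finset.sum_comm]
      refine Finset.sum_congr rfl fun v _ => ?_
      rw [coupling_marg_col hA hU v, Finset.mul_sum]
  rw [key]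
  refine Finset.sum_le_sum fun u _ => Finset.sum_le_sum fun v _ => ?_
  rw [mul_comm (A u v)]
  exact mul_le_mul_of_nonneg_right (hlip u v) (hAnn u v)

end Coupling
section ProductCoupling

attribute [local instance] Classical.propDecidable

variable {V : Type*} {E : V → V → Prop}

lemma mAlpha_support_finite (hlf : LocFin E) (α : ℝ) (x : V) :
    (Function.support (mAlpha E α x)).Finite := by
  refine Set.Finite.subset ((outN_finite hlf x).insert x) ?_
  intro v hv
  rcases mAlpha_support_sub α x hv with h | h
  · exact Set.mem_insert_iff.2 (Or.inl h)
  · exact Set.mem_insert_iff.2 (Or.inr h)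

/-- The product coupling. -/
lemma product_coupling (hlf : LocFin E) (hs : NoLoops E) (hsc : StronglyConnected E)
    {d : ℕ} (hreg : ∀ v : V, deg E v = d) {x y : V}
    (hS : inDeg E x + outDeg E x = inDeg E y + outDeg E y)
    {α : ℝ} (hα : α ∈ Set.Ioo (0:ℝ) 1) :
    IsCoupling E α x y (fun u v => mAlpha E α x u * mAlpha E α y v /
      (α + (1 - α) * ((inDeg E x : ℝ) + (outDeg E x : ℝ)) / (d : ℝ))) := by
  obtain ⟨hα0, hα1⟩ := hα
  have hε : (0:ℝ) < 1 - α := by linarith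
  set M : ℝ := α + (1 - α) * ((inDeg E x : ℝ) + (outDeg E x : ℝ)) / (d : ℝ) with hMdef
  have hdx : deg E x = d := hreg x
  have hdy : deg E y = d := hreg y
  have hdpos : 0 < d := hdx ▸ deg_pos hlf hsc x
  have hdR : (0:ℝ) < (d : ℝ) := by exact_mod_cast hdpos
  have hM : 0 < M := by
    have : (0:ℝ) ≤ (1 - α) * ((inDeg E x : ℝ) + (outDeg E x : ℝ)) / (d : ℝ) :=
      div_nonneg (mul_nonneg hε.le (by positivity)) hdR.le
    rw [hMdef]; linarith
  have htotx : ∑ᶠ v, mAlpha E α x v = M := by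
    rw [finsum_mAlpha hlf hs α x, hdx]
  have htoty : ∑ᶠ v, mAlpha E α y v = M := by
    rw [finsum_mAlpha hlf hs α y, hdy, hMdef]
    have hcongr : (inDeg E y : ℝ) + (outDeg E y : ℝ) = (inDeg E x : ℝ) + (outDeg E x : ℝ) := by
      exact_mod_cast congrArg (Nat.cast (R := ℝ)) hS.symm
    rw [hcongr]
  have hnnx : ∀ u, 0 ≤ mAlpha E α x u := mAlpha_nonneg hα0.le hα1.le x
  have hnny : ∀ v, 0 ≤ mAlpha E α y v := mAlpha_nonneg hα0.le hα1.le y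
  have hmx_le : ∀ u, mAlpha E α x u ≤ M := by
    intro u
    rw [← htotx]
    exact single_le_finsum u (mAlpha_support_finite hlf α x) hnnx
  have hmy_le1 : ∀ v, mAlpha E α y v ≤ 1 := by
    intro v
    unfold mAlpha
    split_ifs with h1 h2
    · have hdin : (inDeg E y : ℝ) ≤ (d : ℝ) := by
        rw [← hdy]; exact_mod_cast din_le_deg hlf y
      have : (1 - α) * (inDeg E y : ℝ) / (deg E y : ℝ) ≤ 1 - α := by
        rw [hdy, div_le_iff₀ hdR]
        nlinarith
      linarith
    · have h1d : (1:ℝ) ≤ (d:ℝ) := by exact_mod_cast hdpos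
      rw [hdy, div_le_one hdR]
      linarith
    · norm_num
  refine ⟨?_, ?_, ?_, ?_⟩
  · -- finite support
    refine Set.Finite.subset (((outN_finite hlf x).insert x).prod
      ((outN_finite hlf y).insert y)) ?_
    rintro ⟨u, v⟩ hp
    simp only [Function.mem_support] at hp
    have hu : mAlpha E α x u ≠ 0 := by
      intro h; apply hp; simp [h]
    have hv : mAlpha E α y v ≠ 0 := by
      intro h; apply hp; simp [h]
    constructor
    · rcases mAlpha_support_sub α x hu with h | h
      · exact Set.mem_insert_iff.2 (Or.inl h)
      · exact Set.mem_insert_iff.2 (Or.inr h)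
    · rcases mAlpha_support_sub α y hv with h | h
      · exact Set.mem_insert_iff.2 (Or.inl h)
      · exact Set.mem_insert_iff.2 (Or.inr h)
  · -- values in [0,1]
    intro u v
    constructor
    · exact div_nonneg (mul_nonneg (hnnx u) (hnny v)) hM.le
    · rw [div_le_one hM]
      calc mAlpha E α x u * mAlpha E α y v ≤ M * 1 :=
            mul_le_mul (hmx_le u) (hmy_le1 v) (hnny v) hM.le
        _ = M := mul_one M
  · -- row marginal
    intro u
    have hrw : (fun v => mAlpha E α x u * mAlpha E α y v / M)
        = fun v => (mAlpha E α x u / M) * mAlpha E α y v := by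
      funext v; ring
    rw [hrw, ← mul_finsum _ _, htoty,
      div_mul_cancel₀ _ hM.ne']
  · -- column marginal
    intro v
    have hrw : (fun u => mAlpha E α x u * mAlpha E α y v / M)
        = fun u => (mAlpha E α y v / M) * mAlpha E α x u := by
      funext u; ring
    rw [hrw, ← mul_finsum _ _, htotx,
      div_mul_cancel₀ _ hM.ne']

end ProductCoupling
section CoreBounds

attribute [local instance] Classical.propDecidable

variable {V : Type*} {E : V → V → Prop}

/-- Flatness forces equal total degree sums along edges. -/
lemma sconst_edge (hlf : LocFin E) (hs : NoLoops E) (hsc : StronglyConnected E)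
    {d : ℕ} (hreg : ∀ v : V, deg E v = d) {x y : V} (hxy : E x y)
    (hten : RicciTendsto E x y 0) :
    inDeg E x + outDeg E x = inDeg E y + outDeg E y := by
  by_contra hne
  have hdpos : 0 < d := (hreg x) ▸ deg_pos hlf hsc x
  have hdR : (0:ℝ) < (d : ℝ) := by exact_mod_cast hdpos
  have hempty : ∀ α : ℝ, α ∈ Set.Ioo (0:ℝ) 1 →
      {w : ℝ | ∃ A : V → V → ℝ, IsCoupling E α x y A ∧
        w = ∑ᶠ u, ∑ᶠ v, A u v * (ddist E u v : ℝ)} = ∅ := by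
    intro α hα
    rw [Set.eq_empty_iff_forall_notMem]
    rintro w ⟨A, hA, -⟩
    have htot := coupling_total hA
    rw [finsum_mAlpha hlf hs α x, finsum_mAlpha hlf hs α y, hreg x, hreg y] at htot
    have hε : (0:ℝ) < 1 - α := by linarith [hα.2]
    have heq : (inDeg E x : ℝ) + (outDeg E x : ℝ) = (inDeg E y : ℝ) + (outDeg E y : ℝ) := by
      have h1 : (1 - α) * ((inDeg E x : ℝ) + (outDeg E x : ℝ)) / (d:ℝ)
          = (1 - α) * ((inDeg E y : ℝ) + (outDeg E y : ℝ)) / (d:ℝ) := by linarith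
      rw [div_eq_mul_inv, div_eq_mul_inv] at h1
      have h2 := mul_right_cancel₀ (inv_ne_zero hdR.ne') h1
      exact mul_left_cancel₀ hε.ne' h2
    exact hne (by exact_mod_cast heq)
  have hone : ∀ α : ℝ, α ∈ Set.Ioo (0:ℝ) 1 → ricciAlpha E α x y = 1 := by
    intro α hα
    unfold ricciAlpha Wass
    rw [hempty α hα, Real.sInf_empty, zero_div, sub_zero]
  have hmem : Set.Ioo (1/2 : ℝ) 1 ∈ nhdsWithin (1:ℝ) (Set.Iio 1) :=
    Ioo_mem_nhdsLT_of_mem (by norm_num)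
  have h2 : ∀ᶠ α in nhdsWithin (1:ℝ) (Set.Iio 1),
      2 ≤ ricciAlpha E α x y / (1 - α) := by
    filter_upwards [hmem] with α hα
    have hα' : α ∈ Set.Ioo (0:ℝ) 1 := ⟨by linarith [hα.1], hα.2⟩
    rw [hone α hα']
    rw [le_div_iff₀ (by linarith [hα.2] : (0:ℝ) < 1 - α)]
    linarith [hα.1]
  have hlt := hten.eventually_lt_const (show (0:ℝ) < 2 by norm_num)
  obtain ⟨α, h2α, hltα⟩ := (h2.and hlt).exists
  linarith

/-- The core duality bound: any linear functional bound on transport cost yields `K ≤ d`. -/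
lemma dual_bound (hlf : LocFin E) (hs : NoLoops E) (hsc : StronglyConnected E)
    {d : ℕ} (hreg : ∀ v : V, deg E v = d) {x y : V} (hxy : E x y)
    (hS : inDeg E x + outDeg E x = inDeg E y + outDeg E y)
    (hten : RicciTendsto E x y 0) (φ : V → ℝ)
    (hlip : ∀ u v, φ u - φ v ≤ (ddist E u v : ℝ)) (K : ℝ)
    (hK : ∀ α : ℝ, α ∈ Set.Ioo (0:ℝ) 1 →
      α + (1 - α) * K / (d:ℝ) ≤ (∑ᶠ u, φ u * mAlpha E α x u) - (∑ᶠ v, φ v * mAlpha E α y v)) :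
    K ≤ (d : ℝ) := by
  have hdpos : 0 < d := (hreg x) ▸ deg_pos hlf hsc x
  have hdR : (0:ℝ) < (d : ℝ) := by exact_mod_cast hdpos
  have hev : ∀ᶠ α in nhdsWithin (1:ℝ) (Set.Iio 1),
      ricciAlpha E α x y / (1 - α) ≤ ((d:ℝ) - K) / d := by
    have hmem : Set.Ioo (0 : ℝ) 1 ∈ nhdsWithin (1:ℝ) (Set.Iio 1) :=
      Ioo_mem_nhdsLT_of_mem (by norm_num)
    filter_upwards [hmem] with α hα
    have hε : (0:ℝ) < 1 - α := by linarith [hα.2]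
    have hW : α + (1 - α) * K / (d:ℝ) ≤ Wass E α x y := by
      refine le_csInf ⟨_, _, product_coupling hlf hs hsc hreg hS hα, rfl⟩ ?_
      rintro w ⟨A, hA, rfl⟩
      exact (hK α hα).trans (weak_duality hA φ hlip)
    have hra : ricciAlpha E α x y = 1 - Wass E α x y := by
      unfold ricciAlpha
      rw [ddist_edge hs hxy]
      norm_num
    rw [hra, div_le_div_iff₀ hε hdR]
    have h1 : (1 - Wass E α x y) ≤ (1 - α) - (1 - α) * K / d := by linarith
    calc (1 - Wass E α x y) * d ≤ ((1 - α) - (1 - α) * K / d) * d := by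
          exact mul_le_mul_of_nonneg_right h1 hdR.le
      _ = ((d:ℝ) - K) * (1 - α) := by field_simp
  have h0 := le_of_tendsto hten hev
  rw [le_div_iff₀ hdR] at h0
  linarith

end CoreBounds
section ConcreteBounds

attribute [local instance] Classical.propDecidable

variable {V : Type*} {E : V → V → Prop}

/-- Lipschitz property of the test function for bound (A). -/
lemma philip_A (hs : NoLoops E) (hsc : StronglyConnected E)
    {x y : V} (hxy : E x y)
    (hdisj : ∀ v, E x v → E y v → False) :
    ∀ u v, (fun u => if u = x then (1:ℝ) else if E y u ∧ u ≠ x then -1 else 0) u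
      - (fun u => if u = x then (1:ℝ) else if E y u ∧ u ≠ x then -1 else 0) v
      ≤ (ddist E u v : ℝ) := by
  intro u v
  simp only
  by_cases huv : u = v
  · subst huv; rw [sub_self]; positivity
  · have h1 : (1:ℝ) ≤ (ddist E u v : ℝ) := by exact_mod_cast one_le_ddist hsc huv
    by_cases hu : u = x
    · rw [if_pos hu]
      by_cases hv2 : E y v ∧ v ≠ x
      · have h2 : (2:ℝ) ≤ (ddist E u v : ℝ) := by
          have hnc : ¬ E u v := fun hc => hdisj v (hu ▸ hc) hv2.1
          exact_mod_cast two_le_ddist hsc huv hnc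
        rw [if_neg hv2.2, if_pos hv2]
        linarith
      · have hvx : v ≠ x := fun h => huv (hu.trans h.symm)
        rw [if_neg hvx, if_neg hv2]
        linarith
    · rw [if_neg hu]
      have e1 : (if E y u ∧ u ≠ x then (-1:ℝ) else 0) ≤ 0 := by split_ifs <;> norm_num
      have e2 : (-1:ℝ) ≤ (if v = x then (1:ℝ) else if E y v ∧ v ≠ x then -1 else 0) := by
        split_ifs <;> norm_num
      linarith

/-- Bound (A), non-reversed version : `din x + dout y ≤ d`. -/
lemma bndA_nonrev (hlf : LocFin E) (hs : NoLoops E) (hsc : StronglyConnected E)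
    {d : ℕ} (hreg : ∀ v : V, deg E v = d)
    (ha : ∀ x y : V, E x y → outN E x ∩ outN E y = ∅)
    {x y : V} (hxy : E x y) (hnrev : ¬E y x)
    (hS : inDeg E x + outDeg E x = inDeg E y + outDeg E y)
    (hten : RicciTendsto E x y 0) :
    inDeg E x + outDeg E y ≤ d := by
  have hxny : x ≠ y := fun h => hs x (h ▸ hxy)
  have hdisj : ∀ v, E x v → E y v → False := by
    intro v h1 h2
    have hv : v ∈ outN E x ∩ outN E y := ⟨h1, h2⟩
    rw [ha x y hxy] at hv
    exact hv
  set φ : V → ℝ := fun u => if u = x then 1 else if E y u ∧ u ≠ x then -1 else 0 with hφ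
  have hφx : φ x = 1 := by simp [hφ]
  have hφy : φ y = 0 := by
    have h1 : y ≠ x := hxny.symm
    have h2 : ¬ (E y y ∧ y ≠ x) := fun hc => hs y hc.1
    simp [hφ, h1, h2, hs y]
  have hK := dual_bound hlf hs hsc hreg hxy hS hten φ (philip_A hs hsc hxy hdisj)
    ((inDeg E x : ℝ) + (outDeg E y : ℝ)) ?_
  · exact_mod_cast hK
  intro α hα
  rw [finsum_mul_mAlpha hlf hs α x φ, finsum_mul_mAlpha hlf hs α y φ, hreg x, hreg y]
  have hsum1 : ∑ v ∈ (outN_finite hlf x).toFinset, φ v * ((1 - α) / (d:ℝ)) = 0 := by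
    refine Finset.sum_eq_zero fun v hv => ?_
    rw [Set.Finite.mem_toFinset] at hv
    have h0 : φ v = 0 := by
      rw [hφ]; simp only
      rw [if_neg (mem_out_ne hs hv), if_neg (fun hc => hdisj v hv hc.1)]
    rw [h0, zero_mul]
  have hsum2 : ∑ w ∈ (outN_finite hlf y).toFinset, φ w * ((1 - α) / (d:ℝ))
      = (outDeg E y : ℝ) * (-((1 - α) / (d:ℝ))) := by
    rw [Finset.sum_congr rfl (fun w hw => ?_), Finset.sum_const, card_outN hlf y,
      nsmul_eq_mul]
    rw [Set.Finite.mem_toFinset] at hw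
    have hwx : w ≠ x := fun h => hnrev (h ▸ hw)
    have e : φ w = -1 := by
      rw [hφ]; simp only; rw [if_neg hwx, if_pos ⟨hw, hwx⟩]
    rw [e]; ring
  rw [hφx, hφy, hsum1, hsum2]
  apply le_of_eq
  ring

/-- Bound (A), general version : `din x + dout y ≤ d + 2`. -/
lemma bndA_rev (hlf : LocFin E) (hs : NoLoops E) (hsc : StronglyConnected E)
    {d : ℕ} (hreg : ∀ v : V, deg E v = d)
    (ha : ∀ x y : V, E x y → outN E x ∩ outN E y = ∅)
    {x y : V} (hxy : E x y)
    (hS : inDeg E x + outDeg E x = inDeg E y + outDeg E y)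
    (hten : RicciTendsto E x y 0) :
    inDeg E x + outDeg E y ≤ d + 2 := by
  have hxny : x ≠ y := fun h => hs x (h ▸ hxy)
  have hdisj : ∀ v, E x v → E y v → False := by
    intro v h1 h2
    have hv : v ∈ outN E x ∩ outN E y := ⟨h1, h2⟩
    rw [ha x y hxy] at hv
    exact hv
  set φ : V → ℝ := fun u => if u = x then 1 else if E y u ∧ u ≠ x then -1 else 0 with hφ
  have hφx : φ x = 1 := by simp [hφ]
  have hφy : φ y = 0 := by
    have h1 : y ≠ x := hxny.symm
    have h2 : ¬ (E y y ∧ y ≠ x) := fun hc => hs y hc.1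
    simp [hφ, h1, h2, hs y]
  have hK := dual_bound hlf hs hsc hreg hxy hS hten φ (philip_A hs hsc hxy hdisj)
    ((inDeg E x : ℝ) + (outDeg E y : ℝ) - 2) ?_
  · have h' : (inDeg E x : ℝ) + (outDeg E y : ℝ) ≤ (d:ℝ) + 2 := by linarith
    exact_mod_cast h'
  intro α hα
  have hε : (0:ℝ) ≤ 1 - α := by linarith [hα.2]
  have hdpos : 0 < d := (hreg x) ▸ deg_pos hlf hsc x
  have hdR : (0:ℝ) < (d : ℝ) := by exact_mod_cast hdpos
  have hc : (0:ℝ) ≤ (1 - α) / (d:ℝ) := div_nonneg hε hdR.le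
  rw [finsum_mul_mAlpha hlf hs α x φ, finsum_mul_mAlpha hlf hs α y φ, hreg x, hreg y]
  have hsum1 : ∑ v ∈ (outN_finite hlf x).toFinset, φ v * ((1 - α) / (d:ℝ)) = 0 := by
    refine Finset.sum_eq_zero fun v hv => ?_
    rw [Set.Finite.mem_toFinset] at hv
    have h0 : φ v = 0 := by
      rw [hφ]; simp only
      rw [if_neg (mem_out_ne hs hv), if_neg (fun hc => hdisj v hv hc.1)]
    rw [h0, zero_mul]
  have hsum2 : ∑ w ∈ (outN_finite hlf y).toFinset, φ w * ((1 - α) / (d:ℝ))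
      ≤ (2 - (outDeg E y : ℝ)) * ((1 - α) / (d:ℝ)) := by
    have hbd : ∀ w ∈ (outN_finite hlf y).toFinset,
        φ w * ((1 - α) / (d:ℝ)) ≤ (-1 + (if w = x then 2 else 0)) * ((1 - α) / (d:ℝ)) := by
      intro w hw
      rw [Set.Finite.mem_toFinset] at hw
      refine mul_le_mul_of_nonneg_right ?_ hc
      by_cases hwx : w = x
      · have e : φ w = 1 := by rw [hφ]; simp only; rw [if_pos hwx]
        rw [e, if_pos hwx]; norm_num
      · have e : φ w = -1 := by
          rw [hφ]; simp only; rw [if_neg hwx, if_pos ⟨hw, hwx⟩]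
        rw [e, if_neg hwx]; norm_num
    calc ∑ w ∈ (outN_finite hlf y).toFinset, φ w * ((1 - α) / (d:ℝ))
        ≤ ∑ w ∈ (outN_finite hlf y).toFinset,
            (-1 + (if w = x then 2 else 0)) * ((1 - α) / (d:ℝ)) := Finset.sum_le_sum hbd
      _ = (-(outDeg E y : ℝ) + ∑ w ∈ (outN_finite hlf y).toFinset,
            (if w = x then (2:ℝ) else 0)) * ((1 - α) / (d:ℝ)) := by
          rw [← Finset.sum_mul]
          congr 1
          rw [Finset.sum_add_distrib, Finset.sum_const, card_outN hlf y, nsmul_eq_mul]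
          ring
      _ ≤ (2 - (outDeg E y : ℝ)) * ((1 - α) / (d:ℝ)) := by
          refine mul_le_mul_of_nonneg_right ?_ hc
          rw [Finset.sum_ite_eq' _ x (fun _ => (2:ℝ))]
          split_ifs <;> linarith
  rw [hφx, hφy, hsum1]
  calc α + (1 - α) * ((inDeg E x : ℝ) + (outDeg E y : ℝ) - 2) / (d:ℝ)
      = (1 * (α + (1 - α) * (inDeg E x : ℝ) / (d:ℝ)) + 0)
        - (0 * (α + (1 - α) * (inDeg E y : ℝ) / (d:ℝ))
           + (2 - (outDeg E y : ℝ)) * ((1 - α) / (d:ℝ))) := by ring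
    _ ≤ (1 * (α + (1 - α) * (inDeg E x : ℝ) / (d:ℝ)) + 0)
        - (0 * (α + (1 - α) * (inDeg E y : ℝ) / (d:ℝ))
           + ∑ w ∈ (outN_finite hlf y).toFinset, φ w * ((1 - α) / (d:ℝ))) := by
        linarith [hsum2]

end ConcreteBounds
section ConcreteBounds2

attribute [local instance] Classical.propDecidable

variable {V : Type*} {E : V → V → Prop}

/-- Bound (B) : for a non-reversed edge, `din x + dout x ≤ d + 1`. -/
lemma bndB (hlf : LocFin E) (hs : NoLoops E) (hsc : StronglyConnected E)
    {d : ℕ} (hreg : ∀ v : V, deg E v = d)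
    (ha : ∀ x y : V, E x y → outN E x ∩ outN E y = ∅)
    {x y : V} (hxy : E x y) (hnrev : ¬E y x)
    (hS : inDeg E x + outDeg E x = inDeg E y + outDeg E y)
    (hten : RicciTendsto E x y 0) :
    inDeg E x + outDeg E x ≤ d + 1 := by
  have hxny : x ≠ y := fun h => hs x (h ▸ hxy)
  have hdisj : ∀ v, E x v → E y v → False := by
    intro v h1 h2
    have hv : v ∈ outN E x ∩ outN E y := ⟨h1, h2⟩
    rw [ha x y hxy] at hv
    exact hv
  set φ : V → ℝ := fun u => if u = x ∨ (E x u ∧ u ≠ y) then 1 else 0 with hφ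
  have hφx : φ x = 1 := by simp [hφ]
  have hφy : φ y = 0 := by
    have h1 : ¬ (y = x ∨ (E x y ∧ y ≠ y)) := by
      rintro (h | h)
      · exact hxny h.symm
      · exact h.2 rfl
    simp only [hφ]
    rw [if_neg h1]
  have hlip : ∀ u v, φ u - φ v ≤ (ddist E u v : ℝ) := by
    intro u v
    by_cases huv : u = v
    · subst huv; rw [sub_self]; positivity
    · have h1 : (1:ℝ) ≤ (ddist E u v : ℝ) := by exact_mod_cast one_le_ddist hsc huv
      have e1 : φ u ≤ 1 := by rw [hφ]; simp only; split_ifs <;> norm_num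
      have e2 : 0 ≤ φ v := by rw [hφ]; simp only; split_ifs <;> norm_num
      linarith
  have hK := dual_bound hlf hs hsc hreg hxy hS hten φ hlip
    ((inDeg E x : ℝ) + (outDeg E x : ℝ) - 1) ?_
  · have h' : (inDeg E x : ℝ) + (outDeg E x : ℝ) ≤ (d:ℝ) + 1 := by linarith
    exact_mod_cast h'
  intro α hα
  rw [finsum_mul_mAlpha hlf hs α x φ, finsum_mul_mAlpha hlf hs α y φ, hreg x, hreg y]
  have hymem : y ∈ (outN_finite hlf x).toFinset := by
    rw [Set.Finite.mem_toFinset]; exact hxy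
  have h1le : 1 ≤ outDeg E x := by
    rw [← card_outN hlf x]
    exact Finset.card_pos.2 ⟨y, hymem⟩
  have hsum1 : ∑ v ∈ (outN_finite hlf x).toFinset, φ v * ((1 - α) / (d:ℝ))
      = ((outDeg E x : ℝ) - 1) * ((1 - α) / (d:ℝ)) := by
    rw [← Finset.add_sum_erase _ _ hymem, hφy, zero_mul, zero_add]
    have hconst : ∀ v ∈ (outN_finite hlf x).toFinset.erase y,
        φ v * ((1 - α) / (d:ℝ)) = (1 - α) / (d:ℝ) := by
      intro v hv
      obtain ⟨hvy, hv'⟩ := Finset.mem_erase.1 hv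
      rw [Set.Finite.mem_toFinset] at hv'
      have e : φ v = 1 := by
        rw [hφ]; simp only
        rw [if_pos (Or.inr ⟨hv', hvy⟩)]
      rw [e, one_mul]
    rw [Finset.sum_congr rfl hconst, Finset.sum_const, nsmul_eq_mul,
      Finset.card_erase_of_mem hymem, card_outN hlf x, Nat.cast_sub h1le]
    push_cast
    ring
  have hsum2 : ∑ w ∈ (outN_finite hlf y).toFinset, φ w * ((1 - α) / (d:ℝ)) = 0 := by
    refine Finset.sum_eq_zero fun w hw => ?_
    rw [Set.Finite.mem_toFinset] at hw
    have hwx : w ≠ x := fun h => hnrev (h ▸ hw)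
    have e : φ w = 0 := by
      rw [hφ]; simp only
      rw [if_neg ?_]
      rintro (h | h)
      · exact hwx h
      · exact hdisj w h.1 hw
    rw [e, zero_mul]
  rw [hφx, hφy, hsum1, hsum2]
  apply le_of_eq
  ring

/-- Bound (D). -/
lemma bndD (hlf : LocFin E) (hs : NoLoops E) (hsc : StronglyConnected E)
    {d : ℕ} (hreg : ∀ v : V, deg E v = d)
    (ha : ∀ x y : V, E x y → outN E x ∩ outN E y = ∅)
    {x y w₀ : V} (hxy : E x y) (hyw : E y w₀) (hwx : w₀ ≠ x)
    (hS : inDeg E x + outDeg E x = inDeg E y + outDeg E y)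
    (hten : RicciTendsto E x y 0) :
    (inDeg E y : ℝ) + 1 ≤ (d:ℝ) +
      ((((outN_finite hlf x).toFinset.erase y).filter (fun v => E v w₀)).card : ℝ) := by
  have hxny : x ≠ y := fun h => hs x (h ▸ hxy)
  have hdisj : ∀ v, E x v → E y v → False := by
    intro v h1 h2
    have hv : v ∈ outN E x ∩ outN E y := ⟨h1, h2⟩
    rw [ha x y hxy] at hv
    exact hv
  have hxw : x ≠ w₀ := fun h => hwx h.symm
  have hnExw : ¬E x w₀ := fun h => hdisj w₀ h hyw
  have hyw0 : y ≠ w₀ := fun h => hs y (h ▸ hyw)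
  set n₁ : ℕ := (((outN_finite hlf x).toFinset.erase y).filter (fun v => E v w₀)).card
    with hn₁
  set φ : V → ℝ := fun u => if u = w₀ then 0 else if E u w₀ then 1 else 2 with hφ
  have hφx : φ x = 2 := by
    rw [hφ]; simp only; rw [if_neg hxw, if_neg hnExw]
  have hφy : φ y = 1 := by
    rw [hφ]; simp only; rw [if_neg hyw0, if_pos hyw]
  have hlip : ∀ u v, φ u - φ v ≤ (ddist E u v : ℝ) := by
    intro u v
    by_cases huv : u = v
    · subst huv; rw [sub_self]; positivity
    · have h1 : (1:ℝ) ≤ (ddist E u v : ℝ) := by exact_mod_cast one_le_ddist hsc huv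
      by_cases hv : v = w₀
      · have e2 : φ v = 0 := by rw [hφ]; simp only; rw [if_pos hv]
        have hunw : u ≠ w₀ := fun h => huv (h.trans hv.symm)
        by_cases hEu : E u w₀
        · have e1 : φ u = 1 := by rw [hφ]; simp only; rw [if_neg hunw, if_pos hEu]
          linarith
        · have h2 : (2:ℝ) ≤ (ddist E u v : ℝ) := by
            have : ¬E u v := fun hc => hEu (hv ▸ hc)
            exact_mod_cast two_le_ddist hsc huv this
          have e1 : φ u = 2 := by rw [hφ]; simp only; rw [if_neg hunw, if_neg hEu]
          linarith
      · have e1 : φ u ≤ 2 := by rw [hφ]; simp only; split_ifs <;> norm_num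
        have e2 : 1 ≤ φ v := by
          rw [hφ]; simp only; rw [if_neg hv]; split_ifs <;> norm_num
        linarith
  have hK := dual_bound hlf hs hsc hreg hxy hS hten φ hlip
    ((inDeg E y : ℝ) + 1 - (n₁ : ℝ)) ?_
  · linarith
  intro α hα
  rw [finsum_mul_mAlpha hlf hs α x φ, finsum_mul_mAlpha hlf hs α y φ, hreg x, hreg y]
  have hymem : y ∈ (outN_finite hlf x).toFinset := by
    rw [Set.Finite.mem_toFinset]; exact hxy
  have hwmem : w₀ ∈ (outN_finite hlf y).toFinset := by
    rw [Set.Finite.mem_toFinset]; exact hyw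
  have h1lex : 1 ≤ outDeg E x := by
    rw [← card_outN hlf x]; exact Finset.card_pos.2 ⟨y, hymem⟩
  have h1ley : 1 ≤ outDeg E y := by
    rw [← card_outN hlf y]; exact Finset.card_pos.2 ⟨w₀, hwmem⟩
  have hn₁le : n₁ ≤ outDeg E x - 1 := by
    rw [hn₁, ← card_outN hlf x, ← Finset.card_erase_of_mem hymem]
    exact Finset.card_filter_le _ _
  -- x-side sum
  have hsum1 : ∑ v ∈ (outN_finite hlf x).toFinset, φ v * ((1 - α) / (d:ℝ))
      = (1 + (n₁ : ℝ) + 2 * (((outDeg E x : ℝ) - 1) - (n₁:ℝ))) * ((1 - α) / (d:ℝ)) := by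
    rw [← Finset.add_sum_erase _ _ hymem, hφy, one_mul]
    rw [← Finset.sum_filter_add_sum_filter_not
      ((outN_finite hlf x).toFinset.erase y) (fun v => E v w₀)
      (fun v => φ v * ((1 - α) / (d:ℝ)))]
    have hpart1 : ∑ v ∈ ((outN_finite hlf x).toFinset.erase y).filter (fun v => E v w₀),
        φ v * ((1 - α) / (d:ℝ)) = (n₁ : ℝ) * ((1 - α) / (d:ℝ)) := by
      have hconst : ∀ v ∈ ((outN_finite hlf x).toFinset.erase y).filter (fun v => E v w₀),
          φ v * ((1 - α) / (d:ℝ)) = (1 - α) / (d:ℝ) := by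
        intro v hv
        obtain ⟨hv, hvE⟩ := Finset.mem_filter.1 hv
        obtain ⟨hvy, hv'⟩ := Finset.mem_erase.1 hv
        rw [Set.Finite.mem_toFinset] at hv'
        have hvw : v ≠ w₀ := fun h => hnExw (h ▸ hv')
        have e : φ v = 1 := by rw [hφ]; simp only; rw [if_neg hvw, if_pos hvE]
        rw [e, one_mul]
      rw [Finset.sum_congr rfl hconst, Finset.sum_const, nsmul_eq_mul, hn₁]
    have hcardnot : (((outN_finite hlf x).toFinset.erase y).filter (fun v => ¬E v w₀)).card
        = (outDeg E x - 1) - n₁ := by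
      rw [Finset.filter_not, Finset.card_sdiff_of_subset (Finset.filter_subset _ _),
        Finset.card_erase_of_mem hymem, card_outN hlf x]
    have hpart2 : ∑ v ∈ ((outN_finite hlf x).toFinset.erase y).filter (fun v => ¬E v w₀),
        φ v * ((1 - α) / (d:ℝ))
        = (((outDeg E x :ℝ) - 1) - (n₁:ℝ)) * (2 * ((1 - α) / (d:ℝ))) := by
      have hconst : ∀ v ∈ ((outN_finite hlf x).toFinset.erase y).filter (fun v => ¬E v w₀),
          φ v * ((1 - α) / (d:ℝ)) = 2 * ((1 - α) / (d:ℝ)) := by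
        intro v hv
        obtain ⟨hv, hvE⟩ := Finset.mem_filter.1 hv
        obtain ⟨hvy, hv'⟩ := Finset.mem_erase.1 hv
        rw [Set.Finite.mem_toFinset] at hv'
        have hvw : v ≠ w₀ := fun h => hnExw (h ▸ hv')
        have e : φ v = 2 := by rw [hφ]; simp only; rw [if_neg hvw, if_neg hvE]
        rw [e]
      rw [Finset.sum_congr rfl hconst, Finset.sum_const, nsmul_eq_mul, hcardnot,
        Nat.cast_sub hn₁le, Nat.cast_sub h1lex]
      push_cast
      ring
    rw [hpart1, hpart2]
    ring
  -- y-side sum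
  have hsum2 : ∑ w ∈ (outN_finite hlf y).toFinset, φ w * ((1 - α) / (d:ℝ))
      = 2 * ((outDeg E y : ℝ) - 1) * ((1 - α) / (d:ℝ)) := by
    rw [← Finset.add_sum_erase _ _ hwmem]
    have e0 : φ w₀ = 0 := by simp [hφ]
    rw [e0, zero_mul, zero_add]
    have hconst : ∀ w ∈ (outN_finite hlf y).toFinset.erase w₀,
        φ w * ((1 - α) / (d:ℝ)) = 2 * ((1 - α) / (d:ℝ)) := by
      intro w hw
      obtain ⟨hwne, hw'⟩ := Finset.mem_erase.1 hw
      rw [Set.Finite.mem_toFinset] at hw'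
      have hnE : ¬E w w₀ := by
        intro hc
        have hmm : w₀ ∈ outN E y ∩ outN E w := ⟨hyw, hc⟩
        rw [ha y w hw'] at hmm
        exact hmm
      have e : φ w = 2 := by rw [hφ]; simp only; rw [if_neg hwne, if_neg hnE]
      rw [e]
    rw [Finset.sum_congr rfl hconst, Finset.sum_const, nsmul_eq_mul,
      Finset.card_erase_of_mem hwmem, card_outN hlf y, Nat.cast_sub h1ley]
    push_cast
    ring
  rw [hφx, hφy, hsum1, hsum2]
  apply le_of_eq
  have hSR : (inDeg E x : ℝ) + (outDeg E x : ℝ) = (inDeg E y : ℝ) + (outDeg E y : ℝ) := by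
    exact_mod_cast congrArg (Nat.cast (R := ℝ)) hS
  linear_combination (2*(α-1)/(d:ℝ)) * hSR

end ConcreteBounds2
theorem stmt_11 (E : V → V → Prop) (hlf : LocFin E) (hs : NoLoops E) (hsc : StronglyConnected E)
    (d : ℕ) (hreg : ∀ v : V, deg E v = d)
    (ha : ∀ x y : V, E x y → outN E x ∩ outN E y = ∅)
    (h : RicciFlat E) :
    ∀ u v : V, outDeg E u = outDeg E v := by
  intro u v
  classical
  by_cases hrev : ∀ a b : V, E a b → E b a
  · -- every edge is reversed : `outN = nbhd`, so `outDeg = d` everywhere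
    have key : ∀ w, outDeg E w = deg E w := by
      intro w
      have hnb : nbhd E w = outN E w := by
        unfold nbhd
        apply Set.union_eq_self_of_subset_left
        intro z hz
        exact hrev z w hz
      rw [outDeg, deg, hnb]
    rw [key u, key v, hreg u, hreg v]
  · push_neg at hrev
    obtain ⟨x₀, y₀, hE₀, hnrev₀⟩ := hrev
    have hSedge : ∀ a b : V, E a b →
        inDeg E a + outDeg E a = inDeg E b + outDeg E b :=
      fun a b hab => sconst_edge hlf hs hsc hreg hab (h a b hab)
    have hSall : ∀ a b : V, inDeg E a + outDeg E a = inDeg E b + outDeg E b :=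
      fun a b => eq_of_edge_le hsc (g := fun w => inDeg E w + outDeg E w)
        (fun p q hpq => le_of_eq (hSedge p q hpq)) a b
    have hB := bndB hlf hs hsc hreg ha hE₀ hnrev₀ (hSedge _ _ hE₀) (h _ _ hE₀)
    set tC : V → ℕ := fun w => ((inN E w) ∩ (outN E w)).ncard with htC
    have hts : ∀ w, d + tC w = inDeg E w + outDeg E w := by
      intro w
      have hh := deg_add_inter hlf w
      rw [hreg w] at hh
      exact hh
    have htle1 : ∀ w, tC w ≤ 1 := by
      intro w
      have h1 := hts w
      have h2 := hts x₀
      have h3 := hSall w x₀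
      omega
    have hteq : ∀ w w', tC w = tC w' := by
      intro w w'
      have h1 := hts w
      have h2 := hts w'
      have h3 := hSall w w'
      omega
    by_cases ht0 : tC u = 0
    · -- no reversed edge anywhere; `inDeg` is monotone along edges
      have hnorev : ∀ a b, E a b → ¬ E b a := by
        intro a b hab hba
        have hmem : b ∈ inN E a ∩ outN E a := ⟨hba, hab⟩
        have hpos : 0 < tC a :=
          (Set.ncard_pos ((inN_finite hlf a).subset Set.inter_subset_left)).2 ⟨b, hmem⟩
        have := hteq a u
        omega
      have hmono : ∀ a b, E a b → inDeg E a ≤ inDeg E b := by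
        intro a b hab
        have h1 := bndA_nonrev hlf hs hsc hreg ha hab (hnorev a b hab)
          (hSedge a b hab) (h a b hab)
        have h2 := hts b
        have h3 := hteq b u
        omega
      have hdin : inDeg E u = inDeg E v := eq_of_edge_le hsc hmono u v
      have := hSall u v
      omega
    · have ht1 : ∀ w, tC w = 1 := by
        intro w
        have h1 := hteq w u
        have h2 := htle1 u
        omega
      rcases Nat.lt_or_ge d 2 with hd1 | hd2
      · -- `d = 1`; then `inDeg ≡ 1`
        have hdpos : 0 < d := (hreg u) ▸ deg_pos hlf hsc u
        have hdin : ∀ w, inDeg E w = 1 := by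
          intro w
          have hle : inDeg E w ≤ d := (hreg w) ▸ din_le_deg hlf w
          have hpos := din_pos hlf hsc w
          omega
        have h1 := hSall u v
        have h2 := hdin u
        have h3 := hdin v
        omega
      · exfalso
        -- a vertex of maximal in-degree
        have hbdd : BddAbove {n : ℕ | ∃ w : V, inDeg E w = n} := by
          refine ⟨d, fun n hn => ?_⟩
          obtain ⟨w, rfl⟩ := hn
          exact (hreg w) ▸ din_le_deg hlf w
        have hne : {n : ℕ | ∃ w : V, inDeg E w = n}.Nonempty := ⟨inDeg E u, u, rfl⟩
        have hmem := Nat.sSup_mem hne hbdd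
        obtain ⟨z₀, hz₀⟩ := hmem
        have hmaxw : ∀ w, inDeg E w ≤ inDeg E z₀ := by
          intro w
          rw [hz₀]
          exact le_csSup hbdd ⟨w, rfl⟩
        -- all out-edges of z₀ are reversed
        have houtin : outN E z₀ ⊆ inN E z₀ := by
          intro q hq
          by_contra hnq
          have h1 := bndA_nonrev hlf hs hsc hreg ha hq hnq (hSedge _ _ hq) (h _ _ hq)
          have h2 := hts q
          have h3 := hmaxw q
          have h4 := hts z₀
          have h5 := ht1 q
          omega
        obtain ⟨p₀, hp₀⟩ := Set.ncard_eq_one.1 (ht1 z₀)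
        have houteq : outN E z₀ = {p₀} := by
          have hsub : outN E z₀ ⊆ {p₀} := by
            intro q hq
            rw [← hp₀]
            exact ⟨houtin hq, hq⟩
          obtain ⟨q, hq⟩ := exists_out hsc z₀
          exact (Set.Nonempty.subset_singleton_iff ⟨q, hq⟩).1 hsub
        have hEz₀p₀ : E z₀ p₀ := by
          have : p₀ ∈ outN E z₀ := by rw [houteq]; rfl
          exact this
        have hEp₀z₀ : E p₀ z₀ := by
          have : p₀ ∈ inN E z₀ ∩ outN E z₀ := by rw [hp₀]; rfl
          exact this.1
        have hdoutz₀ : outDeg E z₀ = 1 := by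
          rw [outDeg, houteq, Set.ncard_singleton]
        have hdinz₀ : inDeg E z₀ = d := by
          have h1 := hts z₀
          have h2 := ht1 z₀
          omega
        have h3 := bndA_rev hlf hs hsc hreg ha hEz₀p₀ (hSedge _ _ hEz₀p₀) (h _ _ hEz₀p₀)
        have hdoutp₀le : outDeg E p₀ ≤ 2 := by omega
        have hdoutp₀pos := dout_pos hlf hsc p₀
        rcases Nat.lt_or_ge (outDeg E p₀) 2 with hc1 | hc2
        · -- `outN p₀ = {z₀}` : the graph collapses to two vertices
          have hone : outDeg E p₀ = 1 := by omega
          obtain ⟨q, hq⟩ := Set.ncard_eq_one.1 hone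
          have hz₀mem : z₀ ∈ outN E p₀ := hEp₀z₀
          rw [hq] at hz₀mem
          have hqz : q = z₀ := hz₀mem.symm
          have houtp : outN E p₀ = {z₀} := by rw [hq, hqz]
          have hconf : ∀ w : V, w = z₀ ∨ w = p₀ := by
            intro w
            obtain ⟨n, hn1, f, h0, hn, hw⟩ := hsc z₀ w
            have key : ∀ i, i ≤ n → f i = z₀ ∨ f i = p₀ := by
              intro i hi
              induction i with
              | zero => exact Or.inl h0
              | succ k ih =>
                rcases ih (by omega) with hk | hk
                · right
                  have hEk := hw k (by omega)
                  rw [hk] at hEk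
                  have : f (k+1) ∈ outN E z₀ := hEk
                  rw [houteq] at this
                  exact this
                · left
                  have hEk := hw k (by omega)
                  rw [hk] at hEk
                  have : f (k+1) ∈ outN E p₀ := hEk
                  rw [houtp] at this
                  exact this
            rcases key n le_rfl with h' | h'
            · exact Or.inl (by rw [← hn, h'])
            · exact Or.inr (by rw [← hn, h'])
          have hnbsub : nbhd E z₀ ⊆ {p₀} := by
            intro w hw
            have hwz : w ≠ z₀ := by
              rintro rfl
              rcases hw with hw1 | hw2
              · exact hs w hw1
              · exact hs w hw2
            rcases hconf w with h' | h'
            · exact absurd h' hwz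
            · exact h'
          have hdle : deg E z₀ ≤ 1 := by
            have := Set.ncard_le_ncard hnbsub (Set.finite_singleton p₀)
            rwa [Set.ncard_singleton] at this
          rw [hreg z₀] at hdle
          omega
        · -- `dout p₀ = 2`
          have htwo : outDeg E p₀ = 2 := by omega
          obtain ⟨a, b, hab, houtp⟩ := Set.ncard_eq_two.1 htwo
          have hz₀mem : z₀ ∈ outN E p₀ := hEp₀z₀
          rw [houtp] at hz₀mem
          have main : ∀ z₁ : V, z₁ ≠ z₀ → outN E p₀ = {z₀, z₁} → False := by
            intro z₁ hne houtp₀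
            have hEp₀z₁ : E p₀ z₁ := by
              have : z₁ ∈ outN E p₀ := by
                rw [houtp₀]
                exact Or.inr rfl
              exact this
            have hnEz₁p₀ : ¬E z₁ p₀ := by
              intro hc
              obtain ⟨c, hc1⟩ := Set.ncard_eq_one.1 (ht1 p₀)
              have m1 : z₁ ∈ inN E p₀ ∩ outN E p₀ := ⟨hc, hEp₀z₁⟩
              have m2 : z₀ ∈ inN E p₀ ∩ outN E p₀ := ⟨hEz₀p₀, hEp₀z₀⟩
              rw [hc1] at m1 m2
              exact hne (m1.trans m2.symm)
            have h7 := bndA_nonrev hlf hs hsc hreg ha hEp₀z₁ hnEz₁p₀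
              (hSedge _ _ hEp₀z₁) (h _ _ hEp₀z₁)
            have hdinp₀ : inDeg E p₀ + 2 = d + 1 := by
              have h8 := hts p₀
              have h9 := ht1 p₀
              omega
            have hdoutz₁ : outDeg E z₁ = 1 := by
              have := dout_pos hlf hsc z₁
              omega
            have hdinz₁ : inDeg E z₁ = d := by
              have h8 := hts z₁
              have h9 := ht1 z₁
              omega
            obtain ⟨p₁, hp₁⟩ := Set.ncard_eq_one.1
              (show (outN E z₁).ncard = 1 from hdoutz₁)
            have hEz₁p₁ : E z₁ p₁ := by
              have : p₁ ∈ outN E z₁ := by rw [hp₁]; rfl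
              exact this
            have hp₁nep₀ : p₁ ≠ p₀ := fun hq => hnEz₁p₀ (hq ▸ hEz₁p₁)
            have hD := bndD hlf hs hsc hreg ha hEp₀z₁ hEz₁p₁ hp₁nep₀
              (hSedge _ _ hEp₀z₁) (h _ _ hEp₀z₁)
            have hn1 : 1 ≤ (((outN_finite hlf p₀).toFinset.erase z₁).filter
                (fun w => E w p₁)).card := by
              by_contra h0
              push_neg at h0
              have hz : (((outN_finite hlf p₀).toFinset.erase z₁).filter
                  (fun w => E w p₁)).card = 0 := by omega
              rw [hz, hdinz₁] at hD
              norm_num at hD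
            obtain ⟨w, hwmem⟩ := Finset.card_pos.1 hn1
            obtain ⟨hwer, hwE⟩ := Finset.mem_filter.1 hwmem
            obtain ⟨hwne, hwout⟩ := Finset.mem_erase.1 hwer
            rw [Set.Finite.mem_toFinset] at hwout
            rw [houtp₀] at hwout
            have hwz₀ : w = z₀ := by
              rcases hwout with h' | h'
              · exact h'
              · exact absurd h' hwne
            have hp₁mem : p₁ ∈ outN E z₀ := by
              rw [← hwz₀]
              exact hwE
            rw [houteq] at hp₁mem
            exact hp₁nep₀ hp₁mem
          rcases hz₀mem with h' | h'
          · refine main b ?_ ?_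
            · intro hbz
              exact hab (h' ▸ hbz ▸ rfl)
            · rw [houtp, h']
          · refine main a ?_ ?_
            · intro haz
              exact hab (haz ▸ h' ▸ rfl)
            · rw [houtp, h', Set.pair_comm]
end
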